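/- In the net setting for distance-regular graphs with d → ∞ and Assumption (DR), suppose that k → ∞ along the net. Then the limits γ_i = lim t^i √(k_i) exist for all i ≥ 0; moreover, for every i ≥ 1: a_i/√k → α_{i+1}/√(ω_1) + γ_1, b_i/k → 1, and c_i → ω_i/ω_1. -/

import Mathlib

open Matrix Filter

/-- A (bundled) distance-regular graph: a finite connected simple graph of diameter `d`
with intersection numbers `a i`, `b i`, `c i` for `0 ≤ i ≤ d`; `b 0` is the valency `k`. -/
structure DRG where
  X : Type
  fin : Fintype X
  G : SimpleGraph X
  d : ℕ
  a : ℕ → ℕ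
  b : ℕ → ℕ
  c : ℕ → ℕ
  conn : G.Connected
  dist_le : ∀ x y : X, G.dist x y ≤ d
  dist_eq : ∃ x y : X, G.dist x y = d
  bd : b d = 0
  c0 : c 0 = 0
  count_c : ∀ i ≤ d, ∀ x y : X, G.dist x y = i →
      {z : X | G.Adj y z ∧ G.dist x z = i - 1}.ncard = c i
  count_a : ∀ i ≤ d, ∀ x y : X, G.dist x y = i →
      {z : X | G.Adj y z ∧ G.dist x z = i}.ncard = a i
  count_b : ∀ i ≤ d, ∀ x y : X, G.dist x y = i →
      {z : X | G.Adj y z ∧ G.dist x z = i + 1}.ncard = b i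

attribute [instance] DRG.fin

noncomputable instance (Γ : DRG) : DecidableEq Γ.X := Classical.decEq _

noncomputable instance (Γ : DRG) : DecidableRel Γ.G.Adj := fun _ _ => Classical.dec _

namespace DRG

variable (Γ : DRG)

/-- The `i`-th distance matrix (over `ℂ`). -/
noncomputable def Amat (i : ℕ) : Matrix Γ.X Γ.X ℂ :=
  Matrix.of fun x y => if Γ.G.dist x y = i then 1 else 0

/-- The adjacency algebra `A(Γ) = span_ℂ {A_0, …, A_d}`. -/
noncomputable def adjAlg : Submodule ℂ (Matrix Γ.X Γ.X ℂ) :=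
  Submodule.span ℂ {M | ∃ i ≤ Γ.d, M = Γ.Amat i}

/-- The matrix `K_t = (t^{∂(x,y)})_{x,y}` (over `ℝ`). -/
noncomputable def Kmat (t : ℝ) : Matrix Γ.X Γ.X ℝ :=
  Matrix.of fun x y => t ^ Γ.G.dist x y

/-- `t ∈ π(Γ)`, i.e. `K_t` is positive semidefinite. -/
def piMem (t : ℝ) : Prop := (Γ.Kmat t).PosSemidef

/-- The Gibbs functional `φ_t(B) = ∑_x t^{∂(x,o)} B_{x,o}` with base vertex `o`. -/
noncomputable def gibbs (t : ℝ) (o : Γ.X) (B : Matrix Γ.X Γ.X ℂ) : ℂ :=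
  ∑ x : Γ.X, (t : ℂ) ^ Γ.G.dist x o * B x o

lemma a_zero : Γ.a 0 = 0 := by
  obtain ⟨x⟩ := Γ.conn.nonempty
  have h := Γ.count_a 0 (Nat.zero_le _) x x (SimpleGraph.dist_self)
  rw [← h]
  convert Set.ncard_empty Γ.X
  ext z
  simp only [Set.mem_setOf_eq, Set.mem_empty_iff_false, iff_false, not_and]
  intro hadj hdist
  exact Γ.G.irrefl ((Γ.conn.dist_eq_zero_iff.mp hdist) ▸ hadj)

lemma exists_pair {i : ℕ} (hi : i ≤ Γ.d) : ∃ x y : Γ.X, Γ.G.dist x y = i := by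
  obtain ⟨x, y, hxy⟩ := Γ.dist_eq
  -- downward induction
  suffices h : ∀ j : ℕ, (∃ x y : Γ.X, Γ.G.dist x y = j) → ∀ i ≤ j, ∃ x y : Γ.X, Γ.G.dist x y = i by
    exact h Γ.d ⟨x, y, hxy⟩ i hi
  intro j
  induction j with
  | zero => rintro h i hi; interval_cases i; exact h
  | succ n ih =>
    rintro ⟨x, y, hxy⟩ i hi
    rcases Nat.lt_or_ge i (n+1) with hlt | hge
    · -- get a pair at distance n
      have hne : x ≠ y := by
        intro h; rw [h, SimpleGraph.dist_self] at hxy; omega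
      obtain ⟨p, hp⟩ := Γ.conn.exists_walk_length_eq_dist x y
      obtain ⟨w, hadj, p', rfl⟩ := SimpleGraph.Walk.exists_eq_cons_of_ne hne p
      have hlen : p'.length = n := by
        simp [SimpleGraph.Walk.length_cons, hxy] at hp; omega
      have h1 : Γ.G.dist w y ≤ n := hlen ▸ SimpleGraph.dist_le p'
      have h2 : n ≤ Γ.G.dist w y := by
        have := Γ.conn.dist_triangle (u := x) (v := w) (w := y)
        have hxw : Γ.G.dist x w ≤ 1 := by
          rw [SimpleGraph.dist_eq_one_iff_adj.mpr hadj]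
        omega
      exact ih ⟨w, y, le_antisymm h1 h2⟩ i (by omega)
    · exact ⟨x, y, by omega⟩

lemma c_one (h : 1 ≤ Γ.d) : Γ.c 1 = 1 := by
  obtain ⟨x, y, hxy⟩ := Γ.exists_pair h
  have hc := Γ.count_c 1 h x y hxy
  rw [← hc]
  have : {z : Γ.X | Γ.G.Adj y z ∧ Γ.G.dist x z = 1 - 1} = {x} := by
    ext z
    simp only [Set.mem_setOf_eq, Set.mem_singleton_iff]
    constructor
    · rintro ⟨hadj, hdist⟩
      exact (Γ.conn.dist_eq_zero_iff.mp hdist).symm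
    · rintro rfl
      exact ⟨(SimpleGraph.dist_eq_one_iff_adj.mp hxy).symm, SimpleGraph.dist_self⟩
  rw [this, Set.ncard_singleton]

lemma sum_eq {i : ℕ} (h1 : 1 ≤ i) (h2 : i ≤ Γ.d) : Γ.c i + Γ.a i + Γ.b i = Γ.b 0 := by
  obtain ⟨x, y, hxy⟩ := Γ.exists_pair h2
  obtain ⟨m, rfl⟩ : ∃ m, i = m + 1 := ⟨i - 1, by omega⟩
  have hc := Γ.count_c (m+1) h2 x y hxy
  have ha := Γ.count_a (m+1) h2 x y hxy
  have hb := Γ.count_b (m+1) h2 x y hxy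
  have hreg : {z : Γ.X | Γ.G.Adj y z}.ncard = Γ.b 0 := by
    have := Γ.count_b 0 (Nat.zero_le _) y y (SimpleGraph.dist_self)
    rw [← this]
    congr 1
    ext z
    simp only [Set.mem_setOf_eq]
    exact ⟨fun h => ⟨h, SimpleGraph.dist_eq_one_iff_adj.mpr h⟩, fun h => h.1⟩
  set S : ℕ → Set Γ.X := fun j => {z : Γ.X | Γ.G.Adj y z ∧ Γ.G.dist x z = j} with hS
  have hsplit : {z : Γ.X | Γ.G.Adj y z} = S m ∪ S (m+1) ∪ S (m+2) := by
    ext z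
    simp only [hS, Set.mem_setOf_eq, Set.mem_union]
    constructor
    · intro hadj
      have hup : Γ.G.dist x z ≤ m + 2 := by
        have := Γ.conn.dist_triangle (u := x) (v := y) (w := z)
        have : Γ.G.dist y z = 1 := SimpleGraph.dist_eq_one_iff_adj.mpr hadj
        omega
      have hlo : m ≤ Γ.G.dist x z := by
        have ht := Γ.conn.dist_triangle (u := x) (v := z) (w := y)
        have : Γ.G.dist z y = 1 := SimpleGraph.dist_eq_one_iff_adj.mpr hadj.symm
        omega
      rcases Nat.lt_or_ge (Γ.G.dist x z) (m+1) with h | h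
      · exact Or.inl (Or.inl ⟨hadj, by omega⟩)
      · rcases Nat.lt_or_ge (Γ.G.dist x z) (m+2) with h' | h'
        · exact Or.inl (Or.inr ⟨hadj, by omega⟩)
        · have := Γ.conn.dist_triangle (u := x) (v := y) (w := z)
          have h1 : Γ.G.dist y z = 1 := SimpleGraph.dist_eq_one_iff_adj.mpr hadj
          exact Or.inr ⟨hadj, by omega⟩
    · intro h
      rcases h with h | h
      · rcases h with h | h <;> exact h.1
      · exact h.1
  have hdisj1 : Disjoint (S m) (S (m+1)) := by
    rw [Set.disjoint_left]; intro z hz1 hz2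
    simp only [hS, Set.mem_setOf_eq] at hz1 hz2; omega
  have hdisj2 : Disjoint (S m ∪ S (m+1)) (S (m+2)) := by
    rw [Set.disjoint_left]; intro z hz1 hz2
    simp only [hS, Set.mem_union, Set.mem_setOf_eq] at hz1 hz2
    rcases hz1 with ⟨-, h1⟩ | ⟨-, h1⟩ <;> exact absurd hz2.2 (by omega)
  have hcard : {z : Γ.X | Γ.G.Adj y z}.ncard = (S m).ncard + (S (m+1)).ncard + (S (m+2)).ncard := by
    rw [hsplit, Set.ncard_union_eq hdisj2 ((S m ∪ S (m+1)).toFinite) ((S (m+2)).toFinite),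
      Set.ncard_union_eq hdisj1 ((S m).toFinite) ((S (m+1)).toFinite)]
  rw [hreg] at hcard
  have hcm : (S m).ncard = Γ.c (m+1) := by
    rw [← hc]; congr 1
  have ham : (S (m+1)).ncard = Γ.a (m+1) := ha
  have hbm : (S (m+2)).ncard = Γ.b (m+1) := hb
  omega

end DRG

section Net

variable {Λ : Type*} [Preorder Λ] [IsDirected Λ (· ≤ ·)] [Nonempty Λ]

/-- The variance `Σ_t²(A) = k(1−t)(1+t+t·a₁)` as a function of the net index. -/
noncomputable def sig2 (Γ : Λ → DRG) (t : Λ → ℝ) (l : Λ) : ℝ :=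
  ((Γ l).b 0 : ℝ) * (1 - t l) * (1 + t l + t l * ((Γ l).a 1 : ℝ))

/-- `ω̄_i = c_i b_{i−1} / Σ_t²(A)`. -/
noncomputable def omegaBar (Γ : Λ → DRG) (t : Λ → ℝ) (i : ℕ) (l : Λ) : ℝ :=
  (((Γ l).c i : ℝ) * ((Γ l).b (i - 1) : ℝ)) / sig2 Γ t l

/-- `ᾱ_i = (a_{i−1} − t·k) / Σ_t(A)`. -/
noncomputable def alphaBar (Γ : Λ → DRG) (t : Λ → ℝ) (i : ℕ) (l : Λ) : ℝ :=
  (((Γ l).a (i - 1) : ℝ) - t l * ((Γ l).b 0 : ℝ)) / Real.sqrt (sig2 Γ t l)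

/-- `k_i = (b₀⋯b_{i−1})/(c₁⋯c_i)` as a real number. -/
noncomputable def kiProd (Γ : Λ → DRG) (i : ℕ) (l : Λ) : ℝ :=
  (∏ h ∈ Finset.range i, ((Γ l).b h : ℝ)) / (∏ h ∈ Finset.range i, ((Γ l).c (h + 1) : ℝ))

/-- `γ̄_i = t^i √(k_i)`. -/
noncomputable def gammaBar (Γ : Λ → DRG) (t : Λ → ℝ) (i : ℕ) (l : Λ) : ℝ :=
  t l ^ i * Real.sqrt (kiProd Γ i l)

/-- Assumption (DR): for every `i ≥ 1` the limits `ω_i = lim ω̄_i` and `α_i = lim ᾱ_i`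
exist (with prescribed values `ω i`, `αl i`) and `ω_i > 0`. -/
def AssumptionDR (Γ : Λ → DRG) (t : Λ → ℝ) (ω αl : ℕ → ℝ) : Prop :=
  ∀ i : ℕ, 1 ≤ i → 0 < ω i ∧ Tendsto (omegaBar Γ t i) atTop (nhds (ω i)) ∧
    Tendsto (alphaBar Γ t i) atTop (nhds (αl i))

end Net


lemma sqrt_prod' {ι : Type*} (s : Finset ι) (f : ι → ℝ) (hf : ∀ j ∈ s, 0 ≤ f j) :
    Real.sqrt (∏ j ∈ s, f j) = ∏ j ∈ s, Real.sqrt (f j) := by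
  induction s using Finset.cons_induction with
  | empty => simp
  | cons a s ha ih =>
    rw [Finset.prod_cons, Finset.prod_cons,
      Real.sqrt_mul (hf a (Finset.mem_cons_self a s)),
      ih (fun j hj => hf j (Finset.mem_cons_of_mem hj))]

/-- Under Assumption (DR), if `k → ∞`, then the limits `γ_i` exist, and moreover
for every `i ≥ 1`: `a_i/√k → α_{i+1}/√ω₁ + γ₁`, `b_i/k → 1`, and `c_i → ω_i/ω₁`. -/
theorem stmt10 {Λ : Type*} [Preorder Λ] [IsDirected Λ (· ≤ ·)] [Nonempty Λ] [Infinite Λ]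
    (Γ : Λ → DRG) (t : Λ → ℝ)
    (hpi : ∀ l : Λ, (Γ l).piMem (t l))
    (hvar : ∀ l : Λ, 0 < sig2 Γ t l)
    (hd : Tendsto (fun l : Λ => (Γ l).d) atTop atTop)
    (ω αl : ℕ → ℝ) (hDR : AssumptionDR Γ t ω αl)
    (hk : Tendsto (fun l : Λ => ((Γ l).b 0 : ℝ)) atTop atTop) :
    ∃ γ : ℕ → ℝ, (∀ i : ℕ, Tendsto (gammaBar Γ t i) atTop (nhds (γ i))) ∧
      ∀ i : ℕ, 1 ≤ i →
        Tendsto (fun l : Λ => ((Γ l).a i : ℝ) / Real.sqrt ((Γ l).b 0)) atTop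
          (nhds (αl (i + 1) / Real.sqrt (ω 1) + γ 1)) ∧
        Tendsto (fun l : Λ => ((Γ l).b i : ℝ) / ((Γ l).b 0 : ℝ)) atTop (nhds 1) ∧
        Tendsto (fun l : Λ => ((Γ l).c i : ℝ)) atTop (nhds (ω i / ω 1)) := by

  classical
  obtain ⟨hw1pos, hw1, ha1⟩ := hDR 1 le_rfl
  have hKpos : ∀ᶠ l in atTop, (0:ℝ) < ((Γ l).b 0 : ℝ) := hk.eventually_gt_atTop 0
  -- K/S → ω 1
  have hKS : Tendsto (fun l => ((Γ l).b 0 : ℝ) / sig2 Γ t l) atTop (nhds (ω 1)) := by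
    apply hw1.congr'
    filter_upwards [hd.eventually_ge_atTop 1] with l hl
    simp [omegaBar, (Γ l).c_one hl]
  -- S/K → (ω 1)⁻¹
  have hSK : Tendsto (fun l => sig2 Γ t l / ((Γ l).b 0 : ℝ)) atTop (nhds (ω 1)⁻¹) := by
    have := hKS.inv₀ (ne_of_gt hw1pos)
    simpa [inv_div] using this
  have hsqSK : Tendsto (fun l => Real.sqrt (sig2 Γ t l / ((Γ l).b 0 : ℝ))) atTop
      (nhds (Real.sqrt (ω 1))⁻¹) := by
    have := hSK.sqrt
    rwa [Real.sqrt_inv] at this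
  -- t·K/√S → -α 1
  have htkS : Tendsto (fun l => t l * ((Γ l).b 0 : ℝ) / Real.sqrt (sig2 Γ t l)) atTop
      (nhds (-αl 1)) := by
    apply ha1.neg.congr
    intro l
    have h0 : (Γ l).a 0 = 0 := (Γ l).a_zero
    simp [alphaBar, h0, neg_div]
  -- t·√K → γ1
  set γ1 : ℝ := -αl 1 * (Real.sqrt (ω 1))⁻¹ with hγ1def
  have htsq : Tendsto (fun l => t l * Real.sqrt ((Γ l).b 0 : ℝ)) atTop (nhds γ1) := by
    have := htkS.mul hsqSK
    apply this.congr'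
    filter_upwards [hKpos] with l hK
    have hS := hvar l
    have hS0 : Real.sqrt (sig2 Γ t l) ≠ 0 := ne_of_gt (Real.sqrt_pos.mpr hS)
    have hK0 : Real.sqrt ((Γ l).b 0 : ℝ) ≠ 0 := ne_of_gt (Real.sqrt_pos.mpr hK)
    rw [Real.sqrt_div hS.le]
    have e : t l * ((Γ l).b 0 : ℝ) / Real.sqrt (sig2 Γ t l) *
        (Real.sqrt (sig2 Γ t l) / Real.sqrt ((Γ l).b 0 : ℝ)) =
        t l * (((Γ l).b 0 : ℝ) / Real.sqrt ((Γ l).b 0 : ℝ)) := by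
      field_simp
    rw [e, Real.div_sqrt]
  -- a_i/√K → α_{i+1}·(√ω1)⁻¹ + γ1
  have hA : ∀ i : ℕ, 1 ≤ i →
      Tendsto (fun l => ((Γ l).a i : ℝ) / Real.sqrt ((Γ l).b 0 : ℝ)) atTop
        (nhds (αl (i+1) * (Real.sqrt (ω 1))⁻¹ + γ1)) := by
    intro i hi
    obtain ⟨-, -, hai⟩ := hDR (i+1) (by omega)
    have := (hai.mul hsqSK).add htsq
    apply this.congr'
    filter_upwards [hKpos] with l hK
    have hS := hvar l
    have hS0 : Real.sqrt (sig2 Γ t l) ≠ 0 := ne_of_gt (Real.sqrt_pos.mpr hS)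
    have hK0 : Real.sqrt ((Γ l).b 0 : ℝ) ≠ 0 := ne_of_gt (Real.sqrt_pos.mpr hK)
    have hi1 : i + 1 - 1 = i := rfl
    rw [Real.sqrt_div hS.le]
    simp only [alphaBar, hi1]
    have e1 : (((Γ l).a i : ℝ) - t l * ((Γ l).b 0 : ℝ)) / Real.sqrt (sig2 Γ t l) *
        (Real.sqrt (sig2 Γ t l) / Real.sqrt ((Γ l).b 0 : ℝ)) =
        (((Γ l).a i : ℝ) - t l * ((Γ l).b 0 : ℝ)) / Real.sqrt ((Γ l).b 0 : ℝ) := by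
      field_simp
    rw [e1, sub_div, mul_div_assoc, Real.div_sqrt]
    ring
  -- √K → ∞ and inverses → 0
  have hsqKtop : Tendsto (fun l => Real.sqrt ((Γ l).b 0 : ℝ)) atTop atTop := by
    rw [tendsto_atTop]
    intro b
    filter_upwards [hk.eventually_ge_atTop (max b 0 ^ 2)] with l hl
    calc b ≤ max b 0 := le_max_left _ _
      _ = Real.sqrt (max b 0 ^ 2) := (Real.sqrt_sq (le_max_right _ _)).symm
      _ ≤ Real.sqrt ((Γ l).b 0 : ℝ) := Real.sqrt_le_sqrt hl
  have hinvsqK : Tendsto (fun l => (Real.sqrt ((Γ l).b 0 : ℝ))⁻¹) atTop (nhds 0) :=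
    hsqKtop.inv_tendsto_atTop
  have hinvK : Tendsto (fun l => (((Γ l).b 0 : ℝ))⁻¹) atTop (nhds 0) :=
    hk.inv_tendsto_atTop
  -- the c-step
  have hCstep : ∀ n : ℕ,
      Tendsto (fun l => ((Γ l).b n : ℝ) / ((Γ l).b 0 : ℝ)) atTop (nhds 1) →
      Tendsto (fun l => ((Γ l).c (n+1) : ℝ)) atTop (nhds (ω (n+1) / ω 1)) := by
    intro n ih
    obtain ⟨hpos, hwn, -⟩ := hDR (n+1) (by omega)
    have hbpos : ∀ᶠ l in atTop, (0:ℝ) < ((Γ l).b n : ℝ) := by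
      have h1 : ∀ᶠ l in atTop, (1:ℝ)/2 < ((Γ l).b n : ℝ) / ((Γ l).b 0 : ℝ) :=
        ih.eventually (eventually_gt_nhds (by norm_num))
      filter_upwards [h1, hKpos] with l h1 hK
      by_contra h
      push_neg at h
      have : ((Γ l).b n : ℝ) / ((Γ l).b 0 : ℝ) ≤ 0 := div_nonpos_of_nonpos_of_nonneg h hK.le
      linarith
    have hKb : Tendsto (fun l => ((Γ l).b 0 : ℝ) / ((Γ l).b n : ℝ)) atTop (nhds 1) := by
      have := ih.inv₀ one_ne_zero
      rw [inv_one] at this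
      apply this.congr
      intro l
      rw [inv_div]
    have := (hwn.mul hSK).mul hKb
    rw [mul_one, ← div_eq_mul_inv] at this
    apply this.congr'
    filter_upwards [hKpos, hbpos] with l hK hb
    have hS := hvar l
    have hn1 : n + 1 - 1 = n := rfl
    simp only [omegaBar, hn1]
    field_simp
  -- b_n/K → 1 by induction
  have hBC : ∀ n : ℕ, Tendsto (fun l => ((Γ l).b n : ℝ) / ((Γ l).b 0 : ℝ)) atTop (nhds 1) := by
    intro n
    induction n with
    | zero =>
      apply tendsto_const_nhds.congr'
      filter_upwards [hKpos] with l hK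
      exact (div_self (ne_of_gt hK)).symm
    | succ n ih =>
      have hc := hCstep n ih
      have ha0 : Tendsto (fun l => ((Γ l).a (n+1) : ℝ) / ((Γ l).b 0 : ℝ)) atTop (nhds 0) := by
        have := (hA (n+1) (by omega)).mul hinvsqK
        rw [mul_zero] at this
        apply this.congr'
        filter_upwards [hKpos] with l hK
        rw [← div_eq_mul_inv, div_div, Real.mul_self_sqrt hK.le]
      have hc0 : Tendsto (fun l => ((Γ l).c (n+1) : ℝ) / ((Γ l).b 0 : ℝ)) atTop (nhds 0) := by
        have := hc.mul hinvK
        rw [mul_zero] at this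
        apply this.congr
        intro l
        rw [div_eq_mul_inv]
      have hlim := ((tendsto_const_nhds (α := Λ) (x := (1:ℝ)) (f := atTop)).sub hc0).sub ha0
      rw [sub_zero, sub_zero] at hlim
      apply hlim.congr'
      filter_upwards [hKpos, hd.eventually_ge_atTop (n+1)] with l hK hdl
      have hsum := (Γ l).sum_eq (i := n+1) (by omega) hdl
      have hcast : ((Γ l).b (n+1) : ℝ) =
          ((Γ l).b 0 : ℝ) - ((Γ l).c (n+1) : ℝ) - ((Γ l).a (n+1) : ℝ) := by
        have := congrArg (Nat.cast : ℕ → ℝ) hsum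
        push_cast at this
        linarith
      rw [hcast]
      field_simp
  -- the limit functions γ
  set g : ℕ → ℝ := fun h => γ1 * (Real.sqrt (ω (h+1) / ω 1))⁻¹ with hgdef
  have hγ1 : (∏ h ∈ Finset.range 1, g h) = γ1 := by
    simp [hgdef, div_self (ne_of_gt hw1pos)]
  -- each factor converges
  have hF : ∀ h : ℕ, Tendsto (fun l =>
      t l * Real.sqrt (((Γ l).b h : ℝ)) / Real.sqrt (((Γ l).c (h+1) : ℝ))) atTop
      (nhds (g h)) := by
    intro h
    have hc := hCstep h (hBC h)
    have hcpos : 0 < ω (h+1) / ω 1 := div_pos (hDR (h+1) (by omega)).1 hw1pos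
    have hsc := hc.sqrt
    have hscinv := hsc.inv₀ (ne_of_gt (Real.sqrt_pos.mpr hcpos))
    have hsb : Tendsto (fun l => Real.sqrt (((Γ l).b h : ℝ) / ((Γ l).b 0 : ℝ))) atTop
        (nhds 1) := by
      have := (hBC h).sqrt
      rwa [Real.sqrt_one] at this
    have := (htsq.mul hsb).mul hscinv
    rw [mul_one] at this
    apply this.congr'
    filter_upwards [hKpos] with l hK
    have hK0 : Real.sqrt ((Γ l).b 0 : ℝ) ≠ 0 := ne_of_gt (Real.sqrt_pos.mpr hK)
    rw [Real.sqrt_div (Nat.cast_nonneg _)]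
    have e : Real.sqrt ((Γ l).b 0 : ℝ) *
        (Real.sqrt ((Γ l).b h : ℝ) / Real.sqrt ((Γ l).b 0 : ℝ)) =
        Real.sqrt ((Γ l).b h : ℝ) := by
      rw [mul_comm]
      exact div_mul_cancel₀ _ hK0
    calc t l * Real.sqrt ((Γ l).b 0 : ℝ) *
          (Real.sqrt ((Γ l).b h : ℝ) / Real.sqrt ((Γ l).b 0 : ℝ)) *
          (Real.sqrt ((Γ l).c (h+1) : ℝ))⁻¹
        = t l * (Real.sqrt ((Γ l).b 0 : ℝ) *
            (Real.sqrt ((Γ l).b h : ℝ) / Real.sqrt ((Γ l).b 0 : ℝ))) *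
            (Real.sqrt ((Γ l).c (h+1) : ℝ))⁻¹ := by ring
      _ = t l * Real.sqrt ((Γ l).b h : ℝ) / Real.sqrt ((Γ l).c (h+1) : ℝ) := by
          rw [e, div_eq_mul_inv]
  -- γ_i exists
  refine ⟨fun i => ∏ h ∈ Finset.range i, g h, ?_, ?_⟩
  · intro i
    have hprod := tendsto_finset_prod (Finset.range i) (fun h _ => hF h)
    apply hprod.congr
    intro l
    unfold gammaBar kiProd
    rw [Real.sqrt_div (Finset.prod_nonneg (fun j _ => Nat.cast_nonneg _)),
      sqrt_prod' _ _ (fun j _ => Nat.cast_nonneg _),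
      sqrt_prod' _ _ (fun j _ => Nat.cast_nonneg _)]
    rw [← Finset.prod_div_distrib]
    symm
    calc (t l) ^ i * ∏ h ∈ Finset.range i,
          (Real.sqrt ((Γ l).b h : ℝ) / Real.sqrt ((Γ l).c (h+1) : ℝ))
        = (∏ _h ∈ Finset.range i, t l) * ∏ h ∈ Finset.range i,
          (Real.sqrt ((Γ l).b h : ℝ) / Real.sqrt ((Γ l).c (h+1) : ℝ)) := by
          rw [Finset.prod_const, Finset.card_range]
      _ = ∏ h ∈ Finset.range i,
          (t l * (Real.sqrt ((Γ l).b h : ℝ) / Real.sqrt ((Γ l).c (h+1) : ℝ))) := by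
          rw [← Finset.prod_mul_distrib]
      _ = ∏ h ∈ Finset.range i,
          (t l * Real.sqrt ((Γ l).b h : ℝ) / Real.sqrt ((Γ l).c (h+1) : ℝ)) := by
          apply Finset.prod_congr rfl
          intro h _
          rw [mul_div_assoc]
  · intro i hi
    refine ⟨?_, hBC i, ?_⟩
    · have h := hA i hi
      simpa only [div_eq_mul_inv, hγ1] using h
    · obtain ⟨m, rfl⟩ : ∃ m, i = m + 1 := ⟨i - 1, by omega⟩
      exact hCstep m (hBC m)
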